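/- There exists an absolute constant c > 0 such that for every integer p ≥ 6, every integer s with 1 ≤ s ≤ p/4, and every real δ > 0, there exist an integer J and vectors v^1, …, v^J ∈ ℝ^p such that: each v^ℓ has at most s nonzero entries and each nonzero entry equals δ/(2·sqrt(s)) or −δ/(2·sqrt(s)); log J ≥ c·s·log(p/s); and for all ℓ1 ≠ ℓ2, δ^2/8 ≤ ‖v^{ℓ1} − v^{ℓ2}‖_2^2 ≤ δ^2. -/

import Mathlib

set_option maxHeartbeats 1000000


noncomputable section

open scoped BigOperators

namespace HomoPursuit

open Matrix

/-- Squared Frobenius norm of a real matrix. -/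
def frobSq {m n : Type*} [Fintype m] [Fintype n] (A : Matrix m n ℝ) : ℝ :=
  ∑ i, ∑ j, (A i j) ^ 2

/-- Frobenius norm of a real matrix. -/
def frob {m n : Type*} [Fintype m] [Fintype n] (A : Matrix m n ℝ) : ℝ :=
  Real.sqrt (frobSq A)

/-- Frobenius inner product `⟨A, B⟩ = tr(Aᵀ B)`. -/
def mdot {m n : Type*} [Fintype m] [Fintype n] (A B : Matrix m n ℝ) : ℝ :=
  ∑ i, ∑ j, A i j * B i j

/-- The `j`-th largest singular value of a real matrix (1-indexed); `0` if out of range. -/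
def sval {m n : Type*} [Fintype m] [Fintype n] [DecidableEq n] (A : Matrix m n ℝ) (j : ℕ) : ℝ :=
  (((Finset.univ.val.map fun i =>
      Real.sqrt ((Matrix.isHermitian_conjTranspose_mul_self A).eigenvalues i)).toList.insertionSort
      (· ≥ ·)).getD (j - 1) 0)

/-- Spectral (operator) norm: the largest singular value. -/
def spec {m n : Type*} [Fintype m] [Fintype n] [DecidableEq n] (A : Matrix m n ℝ) : ℝ :=
  sval A 1

/-- The positive-semidefinite square root `(Aᵀ A)^{1/2}` of a Gram matrix. -/
def gramSqrt {m k : Type*} [Fintype m] [Fintype k] [DecidableEq k] (A : Matrix m k ℝ) :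
    Matrix k k ℝ :=
  (Matrix.posSemidef_conjTranspose_mul_self A).1.eigenvectorUnitary.1 *
    Matrix.diagonal (fun i => Real.sqrt
      ((Matrix.posSemidef_conjTranspose_mul_self A).1.eigenvalues i)) *
    (star (Matrix.posSemidef_conjTranspose_mul_self A).1.eigenvectorUnitary : Matrix k k ℝ)

/-- `(Aᵀ A)^{-1/2}`. -/
def invGramSqrt {m k : Type*} [Fintype m] [Fintype k] [DecidableEq k] (A : Matrix m k ℝ) :
    Matrix k k ℝ :=
  (gramSqrt A)⁻¹

/-- Square root of a diagonal matrix with given (nonnegative) diagonal entries. -/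
def diagSqrt {k : ℕ} (d : Fin k → ℝ) : Matrix (Fin k) (Fin k) ℝ :=
  Matrix.diagonal fun j => Real.sqrt (d j)



/-- Hamming distance between two tuples. -/
private def hdist {s q : ℕ} (x y : Fin s → Fin q) : ℕ :=
  (Finset.univ.filter fun i => x i ≠ y i).card

private lemma hdist_comm {s q : ℕ} (x y : Fin s → Fin q) : hdist x y = hdist y x := by
  unfold hdist
  congr 1
  ext i
  simp [ne_comm]

private lemma hdist_self {s q : ℕ} (x : Fin s → Fin q) : hdist x x = 0 := by
  simp [hdist]

/-- Hamming balls of radius `r` have at most `2^s * q^r` elements. -/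
private lemma ball_card_le {s q : ℕ} (hq : 0 < q) (c : Fin s → Fin q) (r : ℕ) :
    ((Finset.univ : Finset (Fin s → Fin q)).filter fun y => hdist y c ≤ r).card
      ≤ 2 ^ s * q ^ r := by
  classical
  have htarget : ((Finset.univ : Finset (Finset (Fin s) × (Fin r → Fin q)))).card
      = 2 ^ s * q ^ r := by
    simp [Finset.card_univ, Fintype.card_fun]
  rw [← htarget]
  set D : (Fin s → Fin q) → Finset (Fin s) :=
    fun y => Finset.univ.filter fun i => y i ≠ c i with hDdef
  set g : (Fin s → Fin q) → (Fin r → Fin q) := fun y j =>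
    if h : (j : ℕ) < (Finset.sort (D y) (· ≤ ·)).length
      then y ((Finset.sort (D y) (· ≤ ·)).get ⟨j, h⟩) else ⟨0, hq⟩ with hgdef
  have key : ∀ y : Fin s → Fin q, (D y).card ≤ r → ∀ i ∈ D y,
      ∃ hlt : List.idxOf i (Finset.sort (D y) (· ≤ ·)) < r,
        g y ⟨List.idxOf i (Finset.sort (D y) (· ≤ ·)), hlt⟩ = y i := by
    intro y hy i hi
    have hiL : i ∈ Finset.sort (D y) (· ≤ ·) := (Finset.mem_sort _).2 hi
    have hk : List.idxOf i (Finset.sort (D y) (· ≤ ·))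
        < (Finset.sort (D y) (· ≤ ·)).length := List.idxOf_lt_length_iff.2 hiL
    have hlen : (Finset.sort (D y) (· ≤ ·)).length ≤ r := by
      rw [Finset.length_sort]; exact hy
    refine ⟨lt_of_lt_of_le hk hlen, ?_⟩
    rw [hgdef]
    simp only [hk, dif_pos]
    congr 1
    exact List.getElem_idxOf hk
  apply Finset.card_le_card_of_injOn (fun y => (D y, g y))
    (fun _ _ => Finset.mem_univ _)
  intro y1 h1 y2 h2 hF
  simp only [Finset.coe_filter, Set.mem_setOf_eq, Finset.mem_univ, true_and] at h1 h2
  have hD12 : D y1 = D y2 := congrArg Prod.fst hF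
  have hg12 : g y1 = g y2 := congrArg Prod.snd hF
  have hcard1 : (D y1).card ≤ r := h1
  have hcard2 : (D y2).card ≤ r := h2
  funext i
  by_cases hi : i ∈ D y1
  · have hi2 : i ∈ D y2 := hD12 ▸ hi
    obtain ⟨hlt1, e1⟩ := key y1 hcard1 i hi
    obtain ⟨hlt2, e2⟩ := key y2 hcard2 i hi2
    have hidx : List.idxOf i (Finset.sort (D y1) (· ≤ ·))
        = List.idxOf i (Finset.sort (D y2) (· ≤ ·)) := by rw [hD12]
    rw [← e1, ← e2, hg12]
    congr 1
    exact Fin.ext hidx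
  · have hi2 : i ∉ D y2 := hD12 ▸ hi
    rw [hDdef] at hi hi2
    simp only [Finset.mem_filter, Finset.mem_univ, true_and, not_not] at hi hi2
    rw [hi, hi2]

/-- Gilbert–Varshamov-type bound. -/
private lemma exists_good_code (s q r : ℕ) (hq : 0 < q) :
    ∃ C : Finset (Fin s → Fin q),
      (∀ x ∈ C, ∀ y ∈ C, x ≠ y → r + 1 ≤ hdist x y) ∧
      q ^ s ≤ C.card * (2 ^ s * q ^ r) := by
  classical
  set Valid : Finset (Fin s → Fin q) → Prop :=
    fun C => ∀ x ∈ C, ∀ y ∈ C, x ≠ y → r + 1 ≤ hdist x y with hValid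
  have hmax : ∃ C, Valid C ∧ ∀ C', Valid C' → C'.card ≤ C.card := by
    have hne : ((Finset.univ : Finset (Finset (Fin s → Fin q))).filter Valid).Nonempty := by
      refine ⟨∅, ?_⟩
      simp [hValid]
    obtain ⟨C, hC, hCm⟩ := Finset.exists_max_image _ Finset.card hne
    simp only [Finset.mem_filter, Finset.mem_univ, true_and] at hC
    exact ⟨C, hC, fun C' hC' =>
      hCm C' (Finset.mem_filter.2 ⟨Finset.mem_univ _, hC'⟩)⟩
  obtain ⟨C, hCvalid, hCmax⟩ := hmax
  refine ⟨C, hCvalid, ?_⟩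
  have hcover : ∀ x : Fin s → Fin q, ∃ c ∈ C, hdist x c ≤ r := by
    intro x
    by_contra hx
    push_neg at hx
    have hxC : x ∉ C := by
      intro hxc
      have := hx x hxc
      simp [hdist_self] at this
    have hvalid' : Valid (insert x C) := by
      intro a ha b hb hab
      rw [Finset.mem_insert] at ha hb
      obtain rfl | ha := ha
      · obtain rfl | hb := hb
        · exact absurd rfl hab
        · exact hx b hb
      · obtain rfl | hb := hb
        · rw [hdist_comm]; exact hx a ha
        · exact hCvalid a ha b hb hab
    have := hCmax _ hvalid'
    rw [Finset.card_insert_of_notMem hxC] at this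
    omega
  have hsub : (Finset.univ : Finset (Fin s → Fin q)) ⊆
      C.biUnion fun c => Finset.univ.filter fun y => hdist y c ≤ r := by
    intro x _
    obtain ⟨c, hc, hd⟩ := hcover x
    exact Finset.mem_biUnion.2 ⟨c, hc, by simp [hd]⟩
  calc q ^ s = (Finset.univ : Finset (Fin s → Fin q)).card := by
        simp [Finset.card_univ, Fintype.card_fun]
    _ ≤ (C.biUnion fun c => Finset.univ.filter fun y => hdist y c ≤ r).card :=
        Finset.card_le_card hsub
    _ ≤ ∑ c ∈ C, ((Finset.univ : Finset (Fin s → Fin q)).filter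
          fun y => hdist y c ≤ r).card := Finset.card_biUnion_le
    _ ≤ ∑ _c ∈ C, 2 ^ s * q ^ r := Finset.sum_le_sum fun c _ => ball_card_le hq c r
    _ = C.card * (2 ^ s * q ^ r) := by rw [Finset.sum_const, smul_eq_mul]


/-- ℕ-indexed sparse vector associated with a codeword. -/
private def vecN (s m : ℕ) (amp : ℝ) (x : Fin s → Fin (2 * m)) (n : ℕ) : ℝ :=
  if h : n < s * m ∧ 0 < m then
    (if n % m = (x ⟨n / m, (Nat.div_lt_iff_lt_mul h.2).2 h.1⟩ : ℕ) % m then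
      (if ((x ⟨n / m, (Nat.div_lt_iff_lt_mul h.2).2 h.1⟩ : ℕ)) < m then amp else -amp)
    else 0)
  else 0

/-- The sparse vector associated with a codeword. -/
private def vec (p s m : ℕ) (amp : ℝ) (x : Fin s → Fin (2 * m)) (i : Fin p) : ℝ :=
  vecN s m amp x (i : ℕ)

private lemma vecN_apply {s m : ℕ} (amp : ℝ) (x : Fin s → Fin (2 * m)) (b : Fin s) (j : ℕ)
    (hj : j < m) :
    vecN s m amp x (j + (b : ℕ) * m) =
      (if j = (x b : ℕ) % m then
        (if ((x b : ℕ)) < m then amp else -amp) else 0) := by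
  have hm : 0 < m := lt_of_le_of_lt (Nat.zero_le _) hj
  have hlt : j + (b : ℕ) * m < s * m := by
    calc j + (b : ℕ) * m < m + (b : ℕ) * m := by omega
      _ = ((b : ℕ) + 1) * m := by ring
      _ ≤ s * m := Nat.mul_le_mul_right m (by omega)
  have hdiv : (j + (b : ℕ) * m) / m = (b : ℕ) := by
    rw [Nat.add_mul_div_right _ _ hm, Nat.div_eq_of_lt hj]; omega
  have hmod : (j + (b : ℕ) * m) % m = j := by
    rw [Nat.add_mul_mod_self_right, Nat.mod_eq_of_lt hj]
  rw [vecN, dif_pos ⟨hlt, hm⟩]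
  congr 2 <;> simp [hdiv, hmod]

private lemma vecN_zero {s m : ℕ} (amp : ℝ) (x : Fin s → Fin (2 * m)) (n : ℕ)
    (hn : ¬ n < s * m) : vecN s m amp x n = 0 := by
  rw [vecN, dif_neg]
  tauto

/-- Sum over one block. -/
private lemma block_sum {m : ℕ} (t1 t2 : ℕ) (ht1 : t1 < m) (ht2 : t2 < m) (e1 e2 : ℝ) :
    ∑ j ∈ Finset.range m,
        ((if j = t1 then e1 else 0) - (if j = t2 then e2 else 0)) ^ 2
      = if t1 = t2 then (e1 - e2) ^ 2 else e1 ^ 2 + e2 ^ 2 := by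
  by_cases h : t1 = t2
  · subst h
    rw [if_pos rfl]
    have : ∀ j ∈ Finset.range m,
        ((if j = t1 then e1 else 0) - (if j = t1 then e2 else 0)) ^ 2
          = if j = t1 then (e1 - e2) ^ 2 else 0 := by
      intro j _
      by_cases hj : j = t1 <;> simp [hj]
    rw [Finset.sum_congr rfl this, Finset.sum_ite_eq' (Finset.range m) t1
      (fun _ => (e1 - e2) ^ 2), if_pos (Finset.mem_range.2 ht1)]
  · rw [if_neg h]
    have : ∀ j ∈ Finset.range m,
        ((if j = t1 then e1 else 0) - (if j = t2 then e2 else 0)) ^ 2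
          = (if j = t1 then e1 ^ 2 else 0) + (if j = t2 then e2 ^ 2 else 0) := by
      intro j _
      have h' : ¬ t2 = t1 := fun hc => h hc.symm
      by_cases hj1 : j = t1 <;> by_cases hj2 : j = t2
      · exact absurd (hj1.symm.trans hj2) h
      all_goals (simp [hj1, hj2, h, h']; try ring)
    rw [Finset.sum_congr rfl this, Finset.sum_add_distrib,
      Finset.sum_ite_eq' (Finset.range m) t1 (fun _ => e1 ^ 2),
      Finset.sum_ite_eq' (Finset.range m) t2 (fun _ => e2 ^ 2),
      if_pos (Finset.mem_range.2 ht1), if_pos (Finset.mem_range.2 ht2)]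

/-- If two symbols differ but have equal residues, they lie on opposite sides of `m`. -/
private lemma sign_lemma {m : ℕ} (a1 a2 : Fin (2 * m)) (hne : a1 ≠ a2)
    (hmod : (a1 : ℕ) % m = (a2 : ℕ) % m) : ((a1 : ℕ) < m) ↔ ¬ ((a2 : ℕ) < m) := by
  have h1 : (a1 : ℕ) < 2 * m := a1.isLt
  have h2 : (a2 : ℕ) < 2 * m := a2.isLt
  have hm : 0 < m := by omega
  have hne' : (a1 : ℕ) ≠ (a2 : ℕ) := fun h => hne (Fin.ext h)
  have r1 : (a1 : ℕ) % m = if (a1 : ℕ) < m then (a1 : ℕ) else (a1 : ℕ) - m := by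
    split
    · exact Nat.mod_eq_of_lt ‹_›
    · rw [Nat.mod_eq_sub_mod (by omega), Nat.mod_eq_of_lt (by omega)]
  have r2 : (a2 : ℕ) % m = if (a2 : ℕ) < m then (a2 : ℕ) else (a2 : ℕ) - m := by
    split
    · exact Nat.mod_eq_of_lt ‹_›
    · rw [Nat.mod_eq_sub_mod (by omega), Nat.mod_eq_of_lt (by omega)]
  rw [r1, r2] at hmod
  split at hmod <;> split at hmod <;> omega

/-- Closed form for squared distance between two codeword vectors. -/
private lemma vec_dist {p s m : ℕ} (hs : 0 < s) (hm : 0 < m) (hsm : s * m ≤ p) (amp : ℝ)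
    (x y : Fin s → Fin (2 * m)) :
    ∑ i : Fin p, (vec p s m amp x i - vec p s m amp y i) ^ 2
      = ∑ b : Fin s, (if x b = y b then 0
          else if (x b : ℕ) % m = (y b : ℕ) % m then 4 * amp ^ 2 else 2 * amp ^ 2) := by
  have step1 : ∑ i : Fin p, (vec p s m amp x i - vec p s m amp y i) ^ 2
      = ∑ n ∈ Finset.range p, (vecN s m amp x n - vecN s m amp y n) ^ 2 :=
    Fin.sum_univ_eq_sum_range (fun n => (vecN s m amp x n - vecN s m amp y n) ^ 2) p
  have step2 : ∑ n ∈ Finset.range (s * m), (vecN s m amp x n - vecN s m amp y n) ^ 2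
      = ∑ n ∈ Finset.range p, (vecN s m amp x n - vecN s m amp y n) ^ 2 := by
    apply Finset.sum_subset (Finset.range_subset_range.2 hsm)
    intro n _ hn
    rw [Finset.mem_range, not_lt] at hn
    rw [vecN_zero _ _ _ (by omega), vecN_zero _ _ _ (by omega)]
    ring
  have step3 : ∑ n ∈ Finset.range (s * m), (vecN s m amp x n - vecN s m amp y n) ^ 2
      = ∑ bj ∈ (Finset.univ : Finset (Fin s)) ×ˢ Finset.range m,
          (vecN s m amp x (bj.2 + (bj.1 : ℕ) * m)
            - vecN s m amp y (bj.2 + (bj.1 : ℕ) * m)) ^ 2 := by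
    apply Finset.sum_nbij' (fun n => ((⟨n / m % s, Nat.mod_lt _ hs⟩ : Fin s), n % m))
      (fun bj => bj.2 + (bj.1 : ℕ) * m)
    · intro a _
      simp [Finset.mem_product, Nat.mod_lt _ hm]
    · intro bj hbj
      rw [Finset.mem_product, Finset.mem_range] at hbj
      rw [Finset.mem_range]
      calc bj.2 + (bj.1 : ℕ) * m < m + (bj.1 : ℕ) * m := by omega
        _ = ((bj.1 : ℕ) + 1) * m := by ring
        _ ≤ s * m := Nat.mul_le_mul_right m (by have := bj.1.isLt; omega)
    · intro n hn
      rw [Finset.mem_range] at hn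
      have hdm : n / m < s := (Nat.div_lt_iff_lt_mul hm).2 hn
      simp only [Nat.mod_eq_of_lt hdm]
      exact Nat.mod_add_div' n m
    · intro bj hbj
      rw [Finset.mem_product, Finset.mem_range] at hbj
      have hdiv : (bj.2 + (bj.1 : ℕ) * m) / m = (bj.1 : ℕ) := by
        rw [Nat.add_mul_div_right _ _ hm, Nat.div_eq_of_lt hbj.2]; omega
      have hmod : (bj.2 + (bj.1 : ℕ) * m) % m = bj.2 := by
        rw [Nat.add_mul_mod_self_right, Nat.mod_eq_of_lt hbj.2]
      ext
      · simp [hdiv, hmod, Nat.mod_eq_of_lt bj.1.isLt]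
      · simp [hmod]
    · intro n hn
      rw [Finset.mem_range] at hn
      have hdm : n / m < s := (Nat.div_lt_iff_lt_mul hm).2 hn
      simp only [Nat.mod_eq_of_lt hdm, Nat.mod_add_div' n m]
  have step4 : ∑ bj ∈ (Finset.univ : Finset (Fin s)) ×ˢ Finset.range m,
        (vecN s m amp x (bj.2 + (bj.1 : ℕ) * m)
          - vecN s m amp y (bj.2 + (bj.1 : ℕ) * m)) ^ 2
      = ∑ b : Fin s, ∑ j ∈ Finset.range m,
          (vecN s m amp x (j + (b : ℕ) * m) - vecN s m amp y (j + (b : ℕ) * m)) ^ 2 := by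
    rw [Finset.sum_product]
  rw [← step1] at *
  rw [← step2, step3, step4]
  apply Finset.sum_congr rfl
  intro b _
  have hinner : ∀ j ∈ Finset.range m,
      (vecN s m amp x (j + (b : ℕ) * m) - vecN s m amp y (j + (b : ℕ) * m)) ^ 2
        = ((if j = (x b : ℕ) % m then (if ((x b : ℕ)) < m then amp else -amp) else 0)
          - (if j = (y b : ℕ) % m then (if ((y b : ℕ)) < m then amp else -amp) else 0)) ^ 2 := by
    intro j hj
    rw [Finset.mem_range] at hj
    rw [vecN_apply _ _ _ _ hj, vecN_apply _ _ _ _ hj]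
  rw [Finset.sum_congr rfl hinner,
    block_sum _ _ (Nat.mod_lt _ hm) (Nat.mod_lt _ hm)]
  by_cases heq : x b = y b
  · rw [if_pos heq, if_pos (by rw [heq]), heq]
    ring_nf
  · rw [if_neg heq]
    by_cases hmod : (x b : ℕ) % m = (y b : ℕ) % m
    · rw [if_pos hmod, if_pos hmod]
      have hsign := sign_lemma (x b) (y b) heq hmod
      by_cases h1 : ((x b : ℕ)) < m
      · rw [if_pos h1, if_neg (hsign.1 h1)]
        ring
      · rw [if_neg h1, if_pos (by tauto)]
        ring
    · rw [if_neg hmod, if_neg hmod]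
      by_cases h1 : ((x b : ℕ)) < m <;> by_cases h2 : ((y b : ℕ)) < m <;>
        simp [h1, h2] <;> ring
private lemma vec_values {p s m : ℕ} (amp : ℝ) (x : Fin s → Fin (2 * m)) (i : Fin p)
    (h : vec p s m amp x i ≠ 0) : vec p s m amp x i = amp ∨ vec p s m amp x i = -amp := by
  rw [vec, vecN] at h ⊢
  split at h
  · split at h
    · split at h <;> simp_all
    · simp_all
  · simp_all

private lemma vec_ne_zero_facts {p s m : ℕ} (amp : ℝ) (x : Fin s → Fin (2 * m)) (i : Fin p)
    (h : vec p s m amp x i ≠ 0) :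
    ((i : ℕ) < s * m ∧ 0 < m) ∧
      ∀ hb : (i : ℕ) / m < s, (i : ℕ) % m = (x ⟨(i : ℕ) / m, hb⟩ : ℕ) % m := by
  rw [vec, vecN] at h
  split at h
  · rename_i hc
    refine ⟨hc, fun hb => ?_⟩
    by_contra hmod
    rw [if_neg (by convert hmod)] at h
    exact h rfl
  · exact absurd rfl h

private lemma vec_sparse {p s m : ℕ} (amp : ℝ) (x : Fin s → Fin (2 * m)) :
    Set.ncard {i : Fin p | vec p s m amp x i ≠ 0} ≤ s := by
  classical
  set S := {i : Fin p | vec p s m amp x i ≠ 0} with hS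
  have hinj : Set.InjOn (fun i : Fin p => (i : ℕ) / m) S := by
    intro i1 h1 i2 h2 heq
    simp only at heq
    obtain ⟨⟨hlt1, hm⟩, hmod1⟩ := vec_ne_zero_facts amp x i1 h1
    obtain ⟨⟨hlt2, _⟩, hmod2⟩ := vec_ne_zero_facts amp x i2 h2
    have hb1 : (i1 : ℕ) / m < s := (Nat.div_lt_iff_lt_mul hm).2 hlt1
    have hb2 : (i2 : ℕ) / m < s := (Nat.div_lt_iff_lt_mul hm).2 hlt2
    have e1 := hmod1 hb1
    have e2 := hmod2 hb2
    have hfin : (⟨(i1 : ℕ) / m, hb1⟩ : Fin s) = ⟨(i2 : ℕ) / m, hb2⟩ := Fin.ext heq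
    rw [hfin] at e1
    have hmm : (i1 : ℕ) % m = (i2 : ℕ) % m := by rw [e1, e2]
    have heq' : (i1 : ℕ) / m = (i2 : ℕ) / m := heq
    have d1 := Nat.div_add_mod (i1 : ℕ) m
    have d2 := Nat.div_add_mod (i2 : ℕ) m
    rw [heq', hmm] at d1
    exact Fin.ext (by omega)
  calc S.ncard = ((fun i : Fin p => (i : ℕ) / m) '' S).ncard :=
        (Set.ncard_image_of_injOn hinj).symm
    _ ≤ (↑(Finset.range s) : Set ℕ).ncard := by
        apply Set.ncard_le_ncard _ (Finset.finite_toSet _)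
        rintro _ ⟨i, hi, rfl⟩
        obtain ⟨⟨hlt, hm⟩, -⟩ := vec_ne_zero_facts amp x i hi
        simp only [Finset.coe_range, Set.mem_Iio]
        exact (Nat.div_lt_iff_lt_mul hm).2 hlt
    _ = s := by rw [Set.ncard_coe_finset, Finset.card_range]

/-- **Lemma (packing of the sparse hypercube).** -/
theorem sparse_hypercube_packing :
    ∃ c : ℝ, 0 < c ∧
      ∀ p s : ℕ, 6 ≤ p → 1 ≤ s → 4 * s ≤ p →
      ∀ δ : ℝ, 0 < δ →
      ∃ (J : ℕ) (v : Fin J → Fin p → ℝ),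
        (∀ l, Set.ncard {i | v l i ≠ 0} ≤ s) ∧
        (∀ l i, v l i ≠ 0 →
          v l i = δ / (2 * Real.sqrt s) ∨ v l i = -(δ / (2 * Real.sqrt s))) ∧
        c * s * Real.log ((p : ℝ) / s) ≤ Real.log J ∧
        ∀ l1 l2 : Fin J, l1 ≠ l2 →
          δ ^ 2 / 8 ≤ ∑ i, (v l1 i - v l2 i) ^ 2 ∧
            ∑ i, (v l1 i - v l2 i) ^ 2 ≤ δ ^ 2 := by
  refine ⟨1/4, by norm_num, ?_⟩
  intro p s hp6 hs1 hsp δ hδ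
  have hspos : 0 < s := hs1
  set m := p / s with hmdef
  have hm4 : 4 ≤ m := (Nat.le_div_iff_mul_le hspos).2 (by omega)
  have hm : 0 < m := by omega
  have hsm : s * m ≤ p := by rw [hmdef, mul_comm]; exact Nat.div_mul_le_self p s
  set r := s / 4 with hrdef
  obtain ⟨C, hmin, hcard⟩ := exists_good_code s (2 * m) r (by omega)
  set J := C.card with hJdef
  have hJ1 : 1 ≤ J := by
    rcases Nat.eq_zero_or_pos J with h | h
    · rw [h, zero_mul] at hcard
      have : 1 ≤ (2 * m) ^ s := Nat.one_le_pow _ _ (by omega)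
      omega
    · exact h
  have hsR : (0:ℝ) < s := by exact_mod_cast hspos
  set amp := δ / (2 * Real.sqrt s) with hampdef
  have hsqrt : (0:ℝ) < Real.sqrt s := Real.sqrt_pos.2 hsR
  have hamp2 : amp ^ 2 = δ ^ 2 / (4 * s) := by
    rw [hampdef, div_pow, mul_pow, Real.sq_sqrt hsR.le]
    norm_num
  have hampnn : (0:ℝ) ≤ amp ^ 2 := sq_nonneg _
  set w : Fin J → (Fin s → Fin (2 * m)) := fun l => ↑(C.equivFin.symm l) with hwdef
  have hwmem : ∀ l, w l ∈ C := fun l => Finset.coe_mem _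
  have hwinj : Function.Injective w := fun l1 l2 h =>
    C.equivFin.symm.injective (Subtype.ext h)
  clear hwdef
  clear_value J w amp m r
  refine ⟨J, fun l => vec p s m amp (w l), fun l => vec_sparse amp (w l),
    fun l i hi => vec_values amp (w l) i hi, ?_, ?_⟩
  · -- log bound
    have hJR : (0:ℝ) < J := by exact_mod_cast hJ1
    have hm4R : (4:ℝ) ≤ m := by exact_mod_cast hm4
    have hQ8 : (8:ℝ) ≤ 2 * (m:ℝ) := by linarith
    have hQ0 : (0:ℝ) < 2 * (m:ℝ) := by linarith
    have hcastR : (2 * (m:ℝ)) ^ s ≤ (J:ℝ) * (2 ^ s * (2 * (m:ℝ)) ^ r) := by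
      exact_mod_cast hcard
    have hlog := Real.log_le_log (by positivity) hcastR
    rw [Real.log_mul (ne_of_gt hJR) (by positivity),
      Real.log_mul (by positivity) (by positivity),
      Real.log_pow, Real.log_pow, Real.log_pow] at hlog
    have hlog8 : Real.log 8 ≤ Real.log (2 * (m:ℝ)) :=
      Real.log_le_log (by norm_num) hQ8
    have h8 : Real.log (8:ℝ) = 3 * Real.log 2 := by
      rw [show (8:ℝ) = 2 ^ 3 by norm_num, Real.log_pow]
      push_cast; ring
    rw [h8] at hlog8
    have hlog2pos : 0 < Real.log 2 := Real.log_pos (by norm_num)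
    have hlogQ0 : 0 < Real.log (2 * (m:ℝ)) := by linarith
    have hppos : (0:ℝ) < p := by exact_mod_cast (by omega : 0 < p)
    have hpsR : (0:ℝ) < (p:ℝ) / s := by positivity
    have hpnat : p ≤ 2 * m * s := by
      have h1 : s * m + p % s = p := by rw [hmdef]; exact Nat.div_add_mod p s
      have h2 : p % s < s := Nat.mod_lt _ hspos
      have h3 : s ≤ m * s := Nat.le_mul_of_pos_left s hm
      nlinarith
    have hps : (p:ℝ) / s ≤ 2 * (m:ℝ) := by
      rw [div_le_iff₀ hsR]
      calc (p:ℝ) ≤ ((2 * m * s : ℕ) : ℝ) := by exact_mod_cast hpnat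
        _ = 2 * (m:ℝ) * s := by push_cast; ring
    have hlogps : Real.log ((p:ℝ)/s) ≤ Real.log (2 * (m:ℝ)) :=
      Real.log_le_log hpsR hps
    have hrle : (r:ℝ) ≤ (s:ℝ) / 4 := by
      rw [hrdef]
      exact_mod_cast Nat.cast_div_le
    have m1 : (s:ℝ) * Real.log ((p:ℝ)/s) ≤ (s:ℝ) * Real.log (2 * (m:ℝ)) :=
      mul_le_mul_of_nonneg_left hlogps (by positivity)
    have m2 : (r:ℝ) * Real.log (2 * (m:ℝ)) ≤ ((s:ℝ)/4) * Real.log (2 * (m:ℝ)) :=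
      mul_le_mul_of_nonneg_right hrle hlogQ0.le
    have m3 : (s:ℝ) * Real.log 2 ≤ (s:ℝ) * (Real.log (2 * (m:ℝ)) / 3) :=
      mul_le_mul_of_nonneg_left (by linarith) (by positivity)
    have hsL : 0 ≤ (s:ℝ) * Real.log (2 * (m:ℝ)) := by positivity
    linarith
  · -- distance bounds
    intro l1 l2 hne
    have hxy : w l1 ≠ w l2 := fun h => hne (hwinj h)
    have hd : r + 1 ≤ hdist (w l1) (w l2) := hmin _ (hwmem l1) _ (hwmem l2) hxy
    rw [vec_dist hspos hm hsm]
    have h024 : (0:ℝ) ≤ 2 * amp ^ 2 ∧ (0:ℝ) ≤ 4 * amp ^ 2 ∧ 2 * amp ^ 2 ≤ 4 * amp ^ 2 := by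
      refine ⟨by nlinarith, by nlinarith, by nlinarith⟩
    have hub : ∀ b : Fin s, (if w l1 b = w l2 b then (0:ℝ)
        else if (w l1 b : ℕ) % m = (w l2 b : ℕ) % m then 4 * amp ^ 2 else 2 * amp ^ 2)
          ≤ 4 * amp ^ 2 := by
      intro b
      split_ifs <;> [exact h024.1.trans h024.2.2; exact le_refl _; exact h024.2.2] 
    have hlb : ∀ b : Fin s, (if w l1 b = w l2 b then (0:ℝ) else 2 * amp ^ 2)
        ≤ (if w l1 b = w l2 b then (0:ℝ)
          else if (w l1 b : ℕ) % m = (w l2 b : ℕ) % m then 4 * amp ^ 2 else 2 * amp ^ 2) := by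
      intro b
      split_ifs <;> [exact le_refl _; exact h024.2.2; exact le_refl _]
    have hsum_lb : ∑ b : Fin s, (if w l1 b = w l2 b then (0:ℝ) else 2 * amp ^ 2)
        = (hdist (w l1) (w l2) : ℝ) * (2 * amp ^ 2) := by
      rw [Finset.sum_ite, Finset.sum_const, Finset.sum_const, smul_zero, zero_add,
        nsmul_eq_mul]
      congr 2
    constructor
    · have hdR : ((r:ℝ) + 1) ≤ (hdist (w l1) (w l2) : ℝ) := by exact_mod_cast hd
      have hr4 : (s:ℝ) ≤ 4 * ((r:ℝ) + 1) := by
        exact_mod_cast (by omega : s ≤ 4 * (r + 1))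
      have key : δ ^ 2 / 8 ≤ ((r:ℝ) + 1) * (2 * amp ^ 2) := by
        rw [hamp2]
        have expand : ((r:ℝ) + 1) * (2 * (δ ^ 2 / (4 * (s:ℝ))))
            = (((r:ℝ) + 1) * δ ^ 2) / (2 * s) := by ring
        rw [expand, div_le_div_iff₀ (by norm_num) (by positivity)]
        have hmul : δ ^ 2 * (2 * (s:ℝ)) ≤ δ ^ 2 * (8 * ((r:ℝ) + 1)) := by
          apply mul_le_mul_of_nonneg_left _ (sq_nonneg δ)
          linarith
        linarith
      calc δ ^ 2 / 8 ≤ ((r:ℝ) + 1) * (2 * amp ^ 2) := key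
        _ ≤ (hdist (w l1) (w l2) : ℝ) * (2 * amp ^ 2) :=
            mul_le_mul_of_nonneg_right hdR (by positivity)
        _ = ∑ b : Fin s, (if w l1 b = w l2 b then (0:ℝ) else 2 * amp ^ 2) := hsum_lb.symm
        _ ≤ _ := Finset.sum_le_sum (fun b _ => hlb b)
    · calc ∑ b : Fin s, (if w l1 b = w l2 b then (0:ℝ)
            else if (w l1 b : ℕ) % m = (w l2 b : ℕ) % m then 4 * amp ^ 2 else 2 * amp ^ 2)
          ≤ ∑ _b : Fin s, 4 * amp ^ 2 := Finset.sum_le_sum (fun b _ => hub b)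
        _ = (s:ℝ) * (4 * amp ^ 2) := by
            rw [Finset.sum_const, Finset.card_univ, Fintype.card_fin, nsmul_eq_mul]
        _ = δ ^ 2 := by
            rw [hamp2]
            have h4 : (s:ℝ) * (4 * (δ ^ 2 / (4 * (s:ℝ)))) = δ ^ 2 * ((4 * s) / (4 * s)) := by
              ring
            rw [h4, div_self (by positivity), mul_one]

end HomoPursuit
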